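/- Let v_1, ..., v_N be unit vectors in C^r. The following are equivalent: (1) the sum of v_i v_i^* equals (N/r) times the identity matrix on C^r; (2) the nonzero eigenvalues of the Gram matrix X = (⟨v_i, v_j⟩) all equal N/r; (3) the squared Frobenius norm of X equals N²/r. -/

import Mathlib

open Matrix BigOperators

lemma trace_sq_herm {n : Type*} [Fintype n] {M : Matrix n n ℂ} (h : M.IsHermitian) :
    (M * M).trace = ((∑ i, ∑ j, ‖M i j‖ ^ 2 : ℝ) : ℂ) := by
  simp only [Matrix.trace, Matrix.diag, Matrix.mul_apply]
  push_cast
  refine Finset.sum_congr rfl fun i _ => Finset.sum_congr rfl fun j _ => ?_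
  rw [show M j i = (starRingEnd ℂ) (M i j) from (h.apply j i).symm]
  exact RCLike.mul_conj (M i j)

theorem stmt_0 (N r : ℕ) (hr : 0 < r) (hN : 0 < N)
    (v : Fin N → Fin r → ℂ)
    (hunit : ∀ i, ∑ k, ‖v i k‖ ^ 2 = 1)
    (X : Matrix (Fin N) (Fin N) ℂ)
    (hX : ∀ i j, X i j = ∑ k, (starRingEnd ℂ) (v i k) * v j k) :
    List.TFAE
      [ (∑ i, Matrix.vecMulVec (v i) (fun l => (starRingEnd ℂ) (v i l)))
          = ((N : ℂ) / (r : ℂ)) • (1 : Matrix (Fin r) (Fin r) ℂ),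
        ∀ μ : ℂ, Module.End.HasEigenvalue (Matrix.toLin' X) μ →
          μ = 0 ∨ μ = (N : ℂ) / (r : ℂ),
        ∑ i, ∑ j, ‖X i j‖ ^ 2 = (N : ℝ) ^ 2 / (r : ℝ) ] := by
  classical
  have hrC : (r : ℂ) ≠ 0 := Nat.cast_ne_zero.mpr hr.ne'
  set c : ℂ := (N : ℂ) / (r : ℂ) with hc
  set A : Matrix (Fin r) (Fin N) ℂ := Matrix.of fun k i => v i k with hAdef
  have hXA : X = Aᴴ * A := by
    ext i j
    simp [hX, Matrix.mul_apply, Matrix.conjTranspose_apply, hAdef]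
  have hSA : (∑ i, Matrix.vecMulVec (v i) (fun l => (starRingEnd ℂ) (v i l)))
      = A * Aᴴ := by
    ext k l
    simp [Matrix.sum_apply, Matrix.vecMulVec_apply, Matrix.mul_apply,
      Matrix.conjTranspose_apply, hAdef]
  have hHerm : X.IsHermitian := hXA ▸ Matrix.isHermitian_conjTranspose_mul_self A
  have hdiagone : ∀ i, ∑ k, (starRingEnd ℂ) (v i k) * v i k = 1 := by
    intro i
    have : ∀ k, (starRingEnd ℂ) (v i k) * v i k = ((‖v i k‖ ^ 2 : ℝ) : ℂ) := fun k => by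
      rw [RCLike.conj_mul]; norm_cast
    rw [Finset.sum_congr rfl fun k _ => this k, ← Complex.ofReal_sum, hunit i,
      Complex.ofReal_one]
  have htr : X.trace = (N : ℂ) := by
    simp only [Matrix.trace, Matrix.diag]
    simp [hX, hdiagone]
  have htrXX : (X * X).trace = ((∑ i, ∑ j, ‖X i j‖ ^ 2 : ℝ) : ℂ) := trace_sq_herm hHerm
  tfae_have 1 → 2 := by
    intro h1 μ hμ
    have hAAH : A * Aᴴ = c • 1 := by rw [← hSA]; exact h1
    have hXX : X * X = c • X := by
      rw [hXA, Matrix.mul_assoc, ← Matrix.mul_assoc A, hAAH, Matrix.smul_mul,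
        Matrix.one_mul, Matrix.mul_smul]
    obtain ⟨u, hu⟩ := hμ.exists_hasEigenvector
    have h2 : (Matrix.toLin' X) u = μ • u := hu.apply_eq_smul
    have h3 : (Matrix.toLin' (X * X)) u = (μ * μ) • u := by
      rw [Matrix.toLin'_mul, LinearMap.comp_apply, h2, _root_.map_smul, h2, smul_smul]
    rw [hXX, _root_.map_smul] at h3
    simp only [LinearMap.smul_apply, h2, smul_smul] at h3
    have h4 : c * μ = μ * μ := smul_left_injective ℂ hu.right h3
    have h5 : μ * (μ - c) = 0 := by ring_nf; linear_combination -h4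
    rcases mul_eq_zero.mp h5 with h | h
    · exact Or.inl h
    · exact Or.inr (sub_eq_zero.mp h)
  tfae_have 2 → 3 := by
    intro h2
    set μ : Fin N → ℝ := hHerm.eigenvalues with hμdef
    have hev : ∀ j, (μ j : ℂ) = 0 ∨ (μ j : ℂ) = c := by
      intro j
      apply h2
      refine Module.End.hasEigenvalue_of_hasEigenvector
        (⟨Module.End.mem_eigenspace_iff.mpr ?_, ?_⟩ :
          Module.End.HasEigenvector (Matrix.toLin' X) ((μ j : ℂ)) ⇑(hHerm.eigenvectorBasis j))
      · rw [Matrix.toLin'_apply, hHerm.mulVec_eigenvectorBasis j]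
        ext k
        simp [Complex.real_smul, hμdef]
      · intro h
        exact hHerm.eigenvectorBasis.orthonormal.ne_zero j (by ext k; exact congrFun h k)
    set U : Matrix (Fin N) (Fin N) ℂ := (hHerm.eigenvectorUnitary : Matrix (Fin N) (Fin N) ℂ)
      with hUdef
    set D : Matrix (Fin N) (Fin N) ℂ := Matrix.diagonal (RCLike.ofReal ∘ μ) with hDdef
    have hUU : star U * U = 1 := by
      exact_mod_cast Unitary.coe_star_mul_self hHerm.eigenvectorUnitary
    have hspec : X = U * D * star U := hHerm.spectral_theorem
    have hXXspec : X * X = U * (D * D) * star U := by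
      rw [hspec]
      calc U * D * star U * (U * D * star U)
          = U * D * (star U * U) * (D * star U) := by
            simp only [Matrix.mul_assoc]
        _ = U * (D * D) * star U := by rw [hUU]; simp only [Matrix.mul_assoc, Matrix.one_mul]
    have htrD : (X * X).trace = ∑ j, (μ j : ℂ) ^ 2 := by
      rw [hXXspec, Matrix.trace_mul_cycle, hUU, Matrix.one_mul,
        hDdef, Matrix.diagonal_mul_diagonal, Matrix.trace_diagonal]
      simp [pow_two]
    have htrX : X.trace = ∑ j, (μ j : ℂ) := by
      rw [hspec, Matrix.trace_mul_cycle, hUU, Matrix.one_mul, hDdef,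
        Matrix.trace_diagonal]
      simp
    have hsum : ∑ j, (μ j : ℂ) ^ 2 = c * ∑ j, (μ j : ℂ) := by
      rw [Finset.mul_sum]
      refine Finset.sum_congr rfl fun j _ => ?_
      rcases hev j with h | h <;> rw [h] <;> ring
    have : ((∑ i, ∑ j, ‖X i j‖ ^ 2 : ℝ) : ℂ) = ((N : ℝ) ^ 2 / (r : ℝ) : ℝ) := by
      rw [← htrXX, htrD, hsum, ← htrX, htr, hc]
      push_cast
      field_simp
    exact_mod_cast this
  tfae_have 3 → 1 := by
    intro h3
    have hcconj : (starRingEnd ℂ) c = c := by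
      rw [hc]; simp
    set S : Matrix (Fin r) (Fin r) ℂ := A * Aᴴ with hSdef
    rw [hSA]
    have hSherm : S.IsHermitian := Matrix.isHermitian_mul_conjTranspose_self A
    have hStr : S.trace = (N : ℂ) := by
      rw [hSdef, Matrix.trace_mul_comm, ← hXA, htr]
    have hSS : (S * S).trace = (X * X).trace := by
      rw [hXA, hSdef]
      calc (A * Aᴴ * (A * Aᴴ)).trace = (A * (Aᴴ * (A * Aᴴ))).trace := by
            rw [Matrix.mul_assoc]
        _ = ((Aᴴ * (A * Aᴴ)) * A).trace := Matrix.trace_mul_comm _ _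
        _ = (Aᴴ * A * (Aᴴ * A)).trace := by simp only [Matrix.mul_assoc]
    set Y : Matrix (Fin r) (Fin r) ℂ := S - c • 1 with hYdef
    have hYherm : Y.IsHermitian := by
      rw [hYdef]
      refine Matrix.IsHermitian.sub hSherm ?_
      rw [Matrix.IsHermitian, Matrix.conjTranspose_smul, Matrix.conjTranspose_one]
      rw [show star c = c from hcconj]
    have htrYY : (Y * Y).trace = 0 := by
      have e1 : (c • (1 : Matrix (Fin r) (Fin r) ℂ)) * S = c • S := by
        rw [Matrix.smul_mul, Matrix.one_mul]
      have e2 : S * (c • (1 : Matrix (Fin r) (Fin r) ℂ)) = c • S := by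
        rw [Matrix.mul_smul, Matrix.mul_one]
      have e3 : (c • (1 : Matrix (Fin r) (Fin r) ℂ)) * (c • (1 : Matrix (Fin r) (Fin r) ℂ))
          = (c * c) • 1 := by
        rw [Matrix.smul_mul, Matrix.mul_smul, smul_smul, Matrix.one_mul]
      have expand : Y * Y = S * S - c • S - c • S + (c * c) • 1 := by
        rw [hYdef, Matrix.sub_mul, Matrix.mul_sub, Matrix.mul_sub, e1, e2, e3]
        abel
      rw [expand]
      simp only [Matrix.trace_add, Matrix.trace_sub, Matrix.trace_smul, hSS, htrXX, h3, hStr,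
        Matrix.trace_one, Fintype.card_fin, smul_eq_mul]
      push_cast
      rw [hc]
      field_simp
      ring
    have hfrob : ((∑ k, ∑ l, ‖Y k l‖ ^ 2 : ℝ) : ℂ) = 0 := by
      rw [← trace_sq_herm hYherm, htrYY]
    have hfrob' : (∑ k, ∑ l, ‖Y k l‖ ^ 2 : ℝ) = 0 := by exact_mod_cast hfrob
    have hY0 : Y = 0 := by
      ext k l
      have hk := (Finset.sum_eq_zero_iff_of_nonneg (fun k _ =>
        Finset.sum_nonneg fun l _ => sq_nonneg _)).mp hfrob' k (Finset.mem_univ k)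
      have hl := (Finset.sum_eq_zero_iff_of_nonneg (fun l _ => sq_nonneg _)).mp hk l
        (Finset.mem_univ l)
      have : ‖Y k l‖ = 0 := by
        have := sq_eq_zero_iff.mp hl
        exact this
      simpa using norm_eq_zero.mp this
    exact sub_eq_zero.mp (hYdef ▸ hY0)
  tfae_finish
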